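/- Let A be a Noetherian ring, I ⊆ A an ideal, and B a flat A-algebra. Denote by X̂ the I-adic completion of an A-module X. Then for every finite A-module M, the natural map M ⊗_A B̂ → (M ⊗_A B)^ is an isomorphism, and B̂ is flat over A. If moreover I ⊆ Rad(A) and B is faithfully flat over A, then B̂ is faithfully flat over A. -/

import Mathlib

open TensorProduct

section Defs

variable {A : Type} [CommRing A] (I : Ideal A)
variable (M B : Type) [AddCommGroup M] [Module A M] [AddCommGroup B] [Module A B]

lemma tmul_mem_smul_top (J : Ideal A) (x : M) {b : B}
    (hb : b ∈ J • (⊤ : Submodule A B)) :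
    x ⊗ₜ[A] b ∈ J • (⊤ : Submodule A (M ⊗[A] B)) := by
  refine Submodule.smul_induction_on hb (fun a ha y _ => ?_) (fun y z hy hz => ?_)
  · rw [TensorProduct.tmul_smul]
    exact Submodule.smul_mem_smul ha Submodule.mem_top
  · rw [TensorProduct.tmul_add]
    exact Submodule.add_mem _ hy hz

/-- The canonical map `M ⊗ (B/IⁿB) → (M ⊗ B)/Iⁿ(M ⊗ B)`. -/
noncomputable def tensorQuotMap (n : ℕ) :
    M ⊗[A] (B ⧸ (I ^ n • ⊤ : Submodule A B)) →ₗ[A]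
      (M ⊗[A] B) ⧸ (I ^ n • ⊤ : Submodule A (M ⊗[A] B)) :=
  TensorProduct.lift
    { toFun := fun x => Submodule.liftQ _
        ((Submodule.mkQ _).comp (TensorProduct.mk A M B x))
        (fun b hb => by
          simp only [LinearMap.mem_ker, LinearMap.comp_apply, TensorProduct.mk_apply,
            Submodule.mkQ_apply, Submodule.Quotient.mk_eq_zero]
          exact tmul_mem_smul_top M B (I ^ n) x hb)
      map_add' := fun x y => by
        refine LinearMap.ext fun q => ?_
        obtain ⟨b, rfl⟩ := Submodule.Quotient.mk_surjective _ q
        simp [Submodule.liftQ_apply, TensorProduct.add_tmul]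
      map_smul' := fun a x => by
        refine LinearMap.ext fun q => ?_
        obtain ⟨b, rfl⟩ := Submodule.Quotient.mk_surjective _ q
        simp only [Submodule.liftQ_apply, LinearMap.comp_apply, TensorProduct.mk_apply,
          Submodule.mkQ_apply, RingHom.id_apply, LinearMap.smul_apply]
        rw [← TensorProduct.smul_tmul', Submodule.Quotient.mk_smul] }

/-- The natural map `M ⊗_A (I-adic completion of B) → (I-adic completion of M ⊗_A B)`. -/
noncomputable def adicCmp :
    M ⊗[A] AdicCompletion I B →ₗ[A] AdicCompletion I (M ⊗[A] B) :=
  AdicCompletion.lift I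
    (fun n => (tensorQuotMap I M B n).comp
      (LinearMap.lTensor M (AdicCompletion.eval I B n)))
    (by
      intro m n hle
      apply TensorProduct.ext'
      intro x b
      have h3 := b.2 hle
      obtain ⟨bb, hbb⟩ := Submodule.Quotient.mk_surjective _ (AdicCompletion.eval I B n b)
      have hb2 : AdicCompletion.eval I B m b = Submodule.Quotient.mk bb := by
        show b.val m = _
        rw [← h3, show b.val n = AdicCompletion.eval I B n b from rfl, ← hbb]
        simp [AdicCompletion.transitionMap]
      simp only [LinearMap.comp_apply, LinearMap.lTensor_tmul, ← hbb, hb2,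
        tensorQuotMap, TensorProduct.lift.tmul, LinearMap.coe_mk, AddHom.coe_mk,
        Submodule.liftQ_apply, TensorProduct.mk_apply, Submodule.mkQ_apply,
        AdicCompletion.transitionMap]
      rfl)

end Defs
section TSub

variable {A : Type} [CommRing A]
variable {F K B : Type} [AddCommGroup F] [Module A F] [AddCommGroup K] [Module A K]
  [AddCommGroup B] [Module A B]

/-- The image of `S ⊗ B` in `F ⊗ B`. -/
noncomputable def tsub (B : Type) [AddCommGroup B] [Module A B] (S : Submodule A F) :
    Submodule A (F ⊗[A] B) :=
  LinearMap.range (S.subtype.rTensor B)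

lemma range_rTensor_eq_tsub (f : K →ₗ[A] F) :
    LinearMap.range (f.rTensor B) = tsub B (LinearMap.range f) := by
  have h : f = (LinearMap.range f).subtype ∘ₗ f.rangeRestrict := by ext x; rfl
  conv_lhs => rw [h]
  rw [tsub, LinearMap.rTensor_comp, LinearMap.range_comp,
    LinearMap.range_eq_top.mpr (LinearMap.rTensor_surjective B f.surjective_rangeRestrict),
    Submodule.map_top]

lemma tsub_mono {S T : Submodule A F} (h : S ≤ T) : tsub B S ≤ tsub B T := by
  rintro x ⟨y, rfl⟩
  have h1 : S.subtype = T.subtype ∘ₗ Submodule.inclusion h := rfl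
  rw [h1, LinearMap.rTensor_comp]
  exact ⟨(Submodule.inclusion h).rTensor B y, rfl⟩

lemma tsub_top : tsub B (⊤ : Submodule A F) = ⊤ := by
  rw [tsub, LinearMap.range_eq_top]
  exact LinearMap.rTensor_surjective B (fun x => ⟨⟨x, trivial⟩, rfl⟩)

lemma tmul_mem_tsub {S : Submodule A F} {x : F} (hx : x ∈ S) (b : B) :
    x ⊗ₜ[A] b ∈ tsub B S := ⟨(⟨x, hx⟩ : S) ⊗ₜ[A] b, rfl⟩

lemma tsub_smul (J : Ideal A) (S : Submodule A F) :
    tsub B (J • S) = J • tsub B S := by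
  apply le_antisymm
  · rintro x ⟨y, rfl⟩
    induction y with
    | zero => simp
    | add y z hy hz => rw [map_add]; exact Submodule.add_mem _ hy hz
    | tmul s b =>
      obtain ⟨s, hs⟩ := s
      show s ⊗ₜ[A] b ∈ J • tsub B S
      refine Submodule.smul_induction_on hs (fun a ha y hy => ?_) (fun y z hy hz => ?_)
      · rw [← TensorProduct.smul_tmul']
        exact Submodule.smul_mem_smul ha (tmul_mem_tsub hy b)
      · rw [TensorProduct.add_tmul]
        exact Submodule.add_mem _ hy hz
  · refine Submodule.smul_le.mpr (fun a ha x hx => ?_)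
    obtain ⟨y, rfl⟩ := hx
    induction y with
    | zero => simp
    | add y z hy hz => rw [map_add, smul_add]; exact Submodule.add_mem _ hy hz
    | tmul s b =>
      obtain ⟨s, hs⟩ := s
      show a • (s ⊗ₜ[A] b) ∈ tsub B (J • S)
      rw [TensorProduct.smul_tmul']
      exact tmul_mem_tsub (Submodule.smul_mem_smul ha hs) b

lemma mem_tsub_iff_rTensor_mkQ_eq_zero [Module.Flat A B] (S : Submodule A F)
    (x : F ⊗[A] B) : x ∈ tsub B S ↔ S.mkQ.rTensor B x = 0 := by
  have hex : Function.Exact (S.subtype.rTensor B) (S.mkQ.rTensor B) :=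
    Module.Flat.rTensor_exact B (LinearMap.exact_subtype_mkQ S)
  rw [LinearMap.exact_iff] at hex
  constructor
  · intro hx
    rw [← LinearMap.mem_ker, hex]
    exact hx
  · intro hx
    rw [show tsub B S = LinearMap.range (S.subtype.rTensor B) from rfl, ← hex]
    exact hx

lemma tsub_inf [Module.Flat A B] (S T : Submodule A F) :
    tsub B (S ⊓ T) = tsub B S ⊓ tsub B T := by
  apply le_antisymm
  · exact le_inf (tsub_mono inf_le_left) (tsub_mono inf_le_right)
  · intro x hx
    rw [Submodule.mem_inf] at hx
    obtain ⟨hxS, hxT⟩ := hx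
    rw [mem_tsub_iff_rTensor_mkQ_eq_zero] at hxS hxT
    -- use the map F → F/S × F/T
    set g : F →ₗ[A] (F ⧸ S) × (F ⧸ T) := S.mkQ.prod T.mkQ with hg
    have hker : LinearMap.ker g = S ⊓ T := by
      rw [hg, LinearMap.ker_prod, Submodule.ker_mkQ, Submodule.ker_mkQ]
    have hex : Function.Exact ((S ⊓ T).subtype.rTensor B) (g.rTensor B) := by
      apply Module.Flat.rTensor_exact B
      rw [LinearMap.exact_iff, hker, Submodule.range_subtype]
    have h1 : (TensorProduct.prodLeft A A (F ⧸ S) (F ⧸ T) B).toLinearMap.comp (g.rTensor B) =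
        (S.mkQ.rTensor B).prod (T.mkQ.rTensor B) := by
      apply TensorProduct.ext'
      intro y b
      simp [g, TensorProduct.prodLeft]
    have hzero : g.rTensor B x = 0 := by
      rw [← LinearEquiv.map_eq_zero_iff (TensorProduct.prodLeft A A (F ⧸ S) (F ⧸ T) B)]
      have h2 := congrArg (fun φ => φ x) h1
      simp only [LinearMap.coe_comp, Function.comp_apply, LinearEquiv.coe_coe,
        LinearMap.prod_apply, Function.prod] at h2
      rw [h2, hxS, hxT]
      rfl
    obtain ⟨y, hy⟩ := (hex x).mp hzero
    exact ⟨y, hy⟩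

end TSub
section ArtinRees

variable {A : Type} [CommRing A] (I : Ideal A)
variable {F K B : Type} [AddCommGroup F] [Module A F] [AddCommGroup K] [Module A K]
  [AddCommGroup B] [Module A B]

/-- Base-changed Artin–Rees lemma: the filtration induced by `I` on the image of
`f ⊗ 1 : K ⊗ B → F ⊗ B` is stable, provided `B` is flat and `F` is finite over the
Noetherian ring `A`. -/
lemma exists_pow_inf_eq_pow_smul_rTensor [IsNoetherianRing A] [Module.Finite A F]
    [Module.Flat A B] (f : K →ₗ[A] F) :
    ∃ k : ℕ, ∀ n ≥ k, (I ^ n • ⊤ : Submodule A (F ⊗[A] B)) ⊓ LinearMap.range (f.rTensor B) =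
      I ^ (n - k) • (I ^ k • ⊤ ⊓ LinearMap.range (f.rTensor B)) := by
  obtain ⟨k, hk⟩ := Ideal.exists_pow_inf_eq_pow_smul I (LinearMap.range f) (M := F)
  refine ⟨k, fun n hn => ?_⟩
  have htop : ∀ m : ℕ, (I ^ m • ⊤ : Submodule A (F ⊗[A] B)) = tsub B (I ^ m • ⊤ : Submodule A F) :=
    fun m => by rw [tsub_smul, tsub_top]
  rw [range_rTensor_eq_tsub, htop n, htop k, ← tsub_inf, ← tsub_inf, hk n hn,
    ← tsub_smul]

end ArtinRees
namespace ARExact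

open LinearMap AdicCompletion

variable {R : Type} [CommRing R] {I : Ideal R}
variable {M : Type} [AddCommGroup M] [Module R M]
variable {N : Type} [AddCommGroup N] [Module R N]
variable {P : Type} [AddCommGroup P] [Module R P]

section Injectivity

variable (I) in
/-- `AdicCompletion.map_injective` with the Artin–Rees property as an explicit hypothesis
instead of Noetherian/finiteness assumptions. -/
theorem map_injective' {f : M →ₗ[R] N} (hf : Function.Injective f)
    {k : ℕ}
    (hk : ∀ n ≥ k, (I ^ n • ⊤ : Submodule R N) ⊓ LinearMap.range f =
      I ^ (n - k) • (I ^ k • ⊤ ⊓ LinearMap.range f)) :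
    Function.Injective (map I f) := by
  rw [← LinearMap.ker_eq_bot, LinearMap.ker_eq_bot']
  intro x
  apply AdicCompletion.induction_on I M x (fun a ↦ ?_)
  intro hx
  refine AdicCompletion.mk_zero_of _ _ _ ⟨42, fun n _ ↦ ⟨n + k, by omega, n, by omega, ?_⟩⟩
  rw [← Submodule.comap_map_eq_of_injective hf (I ^ n • ⊤ : Submodule R M),
    Submodule.map_smul'', Submodule.map_top]
  apply (smul_mono_right _ inf_le_right :
    I ^ n • (I ^ k • ⊤ ⊓ LinearMap.range f) ≤ _)
  nth_rw 1 [show n = n + k - k by omega]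
  rw [← hk (n + k) (show n + k ≥ k by omega)]
  exact ⟨by simpa using congrArg (fun x ↦ x.val (n + k)) hx, ⟨a (n + k), rfl⟩⟩

end Injectivity

section Exactness

variable {f : M →ₗ[R] N} {g : N →ₗ[R] P} (hf : Function.Injective f)
  (hfg : Function.Exact f g) (hg : Function.Surjective g)

section

variable {k : ℕ}
  (hkn : ∀ n ≥ k, (I ^ n • ⊤ : Submodule R N) ⊓ LinearMap.range f =
    I ^ (n - k) • (I ^ k • ⊤ ⊓ LinearMap.range f))
  (x : AdicCauchySequence I N) (hker : ∀ (n : ℕ), g (x n) ∈ (I ^ n • ⊤ : Submodule R P))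

/- In each step, a preimage is constructed from the preimage of the previous step by
adding this delta. -/
private noncomputable def mapExactAuxDelta {n : ℕ} {d : N}
    (hdmem : d ∈ (I ^ (k + n + 1) • ⊤ : Submodule R N)) {y yₙ : M}
    (hd : f y = x (k + n + 1) - d) (hyₙ : f yₙ - x (k + n) ∈ (I ^ (k + n) • ⊤ : Submodule R N)) :
    { d : (I ^ n • ⊤ : Submodule R M)
      | f (yₙ + d) - x (k + n + 1) ∈ (I ^ (k + n + 1) • ⊤ : Submodule R N) } :=
  have h : f (y - yₙ) ∈ (I ^ (k + n) • ⊤ : Submodule R N) := by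
    simp only [map_sub, hd]
    convert_to x (k + n + 1) - x (k + n) - d - (f yₙ - x (k + n)) ∈ I ^ (k + n) • ⊤
    · abel
    · refine Submodule.sub_mem _ (Submodule.sub_mem _ ?_ ?_) hyₙ
      · rw [← Submodule.Quotient.eq]
        exact AdicCauchySequence.mk_eq_mk (by omega) _
      · exact (Submodule.smul_mono_left (Ideal.pow_le_pow_right (by omega))) hdmem
  have hincl : I ^ (k + n - k) • (I ^ k • ⊤ ⊓ range f) ≤ I ^ (k + n - k) • (range f) :=
    smul_mono_right _ inf_le_right
  have hyyₙ : y - yₙ ∈ (I ^ n • ⊤ : Submodule R M) := by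
    convert_to y - yₙ ∈ (I ^ (k + n - k) • ⊤ : Submodule R M)
    · simp
    · rw [← Submodule.comap_map_eq_of_injective hf (I ^ (k + n - k) • ⊤ : Submodule R M),
        Submodule.map_smul'', Submodule.map_top]
      apply hincl
      rw [← hkn (k + n) (by omega)]
      exact ⟨h, ⟨y - yₙ, rfl⟩⟩
  ⟨⟨y - yₙ, hyyₙ⟩, by simpa [hd, Nat.succ_eq_add_one, Nat.add_assoc]⟩

open Submodule

include hfg in
/- Inductively construct preimage of cauchy sequence in kernel of `g.adicCompletion I`. -/
private noncomputable def mapExactAux :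
    (n : ℕ) → { a : M | f a - x (k + n) ∈ (I ^ (k + n) • ⊤ : Submodule R N) }
  | .zero =>
      let d := (h2 0).choose
      let y := (h2 0).choose_spec.choose
      have hdy : f y = x (k + 0) - d := (h2 0).choose_spec.choose_spec.right
      have hdmem := (h2 0).choose_spec.choose_spec.left
      ⟨y, by simpa [hdy]⟩
  | .succ n =>
      let d := (h2 <| n + 1).choose
      let y := (h2 <| n + 1).choose_spec.choose
      have hdy : f y = x (k + (n + 1)) - d := (h2 <| n + 1).choose_spec.choose_spec.right
      have hdmem := (h2 <| n + 1).choose_spec.choose_spec.left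
      let ⟨yₙ, (hyₙ : f yₙ - x (k + n) ∈ (I ^ (k + n) • ⊤ : Submodule R N))⟩ :=
        mapExactAux n
      let ⟨d, hd⟩ := mapExactAuxDelta hf hkn x hdmem hdy hyₙ
      ⟨yₙ + d, hd⟩
 where
  h1 (n : ℕ) : g (x (k + n)) ∈ Submodule.map g (I ^ (k + n) • ⊤ : Submodule R N) := by
    rw [map_smul'', Submodule.map_top, range_eq_top.mpr hg]
    exact hker (k + n)
  h2 (n : ℕ) : ∃ (d : N) (y : M),
      d ∈ (I ^ (k + n) • ⊤ : Submodule R N) ∧ f y = x (k + n) - d := by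
    obtain ⟨d, hdmem, hd⟩ := h1 n
    obtain ⟨y, hdy⟩ := (hfg (x (k + n) - d)).mp (by simp [hd])
    exact ⟨d, y, hdmem, hdy⟩

end

include hf hfg hg in
/-- `AdicCompletion.map_exact` with the Artin–Rees property as an explicit hypothesis
instead of Noetherian/finiteness assumptions. -/
theorem map_exact' {k : ℕ}
    (hk : ∀ n ≥ k, (I ^ n • ⊤ : Submodule R N) ⊓ LinearMap.range f =
      I ^ (n - k) • (I ^ k • ⊤ ⊓ LinearMap.range f)) :
    Function.Exact (map I f) (map I g) := by
  refine LinearMap.exact_of_comp_eq_zero_of_ker_le_range ?_ (fun y ↦ ?_)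
  · rw [AdicCompletion.map_comp, hfg.linearMap_comp_eq_zero, AdicCompletion.map_zero]
  · apply AdicCompletion.induction_on I N y (fun b ↦ ?_)
    intro hz
    have hb (n : ℕ) : g (b n) ∈ (I ^ n • ⊤ : Submodule R P) := by
      simpa using congrArg (fun x ↦ x.val n) hz
    let a := mapExactAux hf hfg hg hk b hb
    refine ⟨AdicCompletion.mk I M (AdicCauchySequence.mk I M (fun n ↦ (a n : M)) ?_), ?_⟩
    · refine fun n ↦ SModEq.symm ?_
      simp [a, mapExactAux, SModEq]
    · ext n
      suffices h : Submodule.Quotient.mk (p := (I ^ n • ⊤ : Submodule R N)) (f (a n)) =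
            Submodule.Quotient.mk (p := (I ^ n • ⊤ : Submodule R N)) (b (k + n)) by
        simp [h, AdicCauchySequence.mk_eq_mk (show n ≤ k + n by omega)]
      rw [Submodule.Quotient.eq]
      have hle : (I ^ (k + n) • ⊤ : Submodule R N) ≤ (I ^ n • ⊤ : Submodule R N) :=
        Submodule.smul_mono_left (Ideal.pow_le_pow_right (by omega))
      exact hle (a n).property

end Exactness

end ARExact
section AdicCmpLemmas

variable {A : Type} [CommRing A] (I : Ideal A)
variable {M M' B : Type} [AddCommGroup M] [Module A M] [AddCommGroup M'] [Module A M']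
  [AddCommGroup B] [Module A B]

@[simp]
lemma tensorQuotMap_tmul_mk (n : ℕ) (x : M) (b : B) :
    tensorQuotMap I M B n (x ⊗ₜ[A] Submodule.Quotient.mk b) =
      Submodule.Quotient.mk (p := (I ^ n • ⊤ : Submodule A (M ⊗[A] B))) (x ⊗ₜ[A] b) :=
  rfl

@[simp]
lemma adicCmp_tmul_val (x : M) (b : AdicCompletion I B) (n : ℕ) :
    (adicCmp I M B (x ⊗ₜ[A] b)).val n = tensorQuotMap I M B n (x ⊗ₜ[A] b.val n) :=
  rfl

/-- Naturality of `adicCmp`. -/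
lemma adicCmp_naturality (φ : M →ₗ[A] M') :
    (AdicCompletion.map I (φ.rTensor B)).restrictScalars A ∘ₗ adicCmp I M B =
      adicCmp I M' B ∘ₗ (φ.rTensor (AdicCompletion I B)) := by
  apply TensorProduct.ext'
  intro x b
  ext n
  obtain ⟨bb, hbb⟩ := Submodule.Quotient.mk_surjective _ (b.val n)
  simp only [LinearMap.coe_comp, Function.comp_apply, LinearMap.coe_restrictScalars,
    LinearMap.rTensor_tmul, AdicCompletion.map_val_apply, adicCmp_tmul_val, ← hbb,
    tensorQuotMap_tmul_mk]
  exact congrArg (Submodule.Quotient.mk) rfl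

end AdicCmpLemmas
section FreeCase

variable {A : Type} [CommRing A] (I : Ideal A)
variable (B : Type) [AddCommGroup B] [Module A B]
variable (ι : Type) [Fintype ι] [DecidableEq ι]

/-- The equivalence `(ι → A) ⊗ B ≃ (ι → B)`. -/
noncomputable def freeTensorEquiv : (ι → A) ⊗[A] B ≃ₗ[A] (ι → B) :=
  (TensorProduct.comm A (ι → A) B).trans (TensorProduct.piScalarRight A A B ι)

lemma freeTensorEquiv_tmul (x : ι → A) (b : B) :
    freeTensorEquiv B ι (x ⊗ₜ[A] b) = fun j => x j • b := by
  simp [freeTensorEquiv]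

set_option synthInstance.maxHeartbeats 400000 in
set_option maxHeartbeats 1000000 in
lemma adicCmp_free_eq (t : (ι → A) ⊗[A] AdicCompletion I B) :
    (AdicCompletion.piEquivOfFintype I (fun _ : ι => B))
        ((AdicCompletion.congr I (freeTensorEquiv B ι)) (adicCmp I (ι → A) B t)) =
      freeTensorEquiv (AdicCompletion I B) ι t := by
  induction t with
  | zero => rw [map_zero, map_zero, map_zero, map_zero]
  | add y z hy hz => rw [map_add, map_add, map_add, map_add, hy, hz]
  | tmul x b =>
    refine funext (fun j => ?_)
    ext n
    obtain ⟨bb, hbb⟩ := Submodule.Quotient.mk_surjective _ (b.val n)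
    set z := (AdicCompletion.congr I (freeTensorEquiv B ι)) (adicCmp I (ι → A) B (x ⊗ₜ[A] b))
      with hz
    have h1 : (adicCmp I (ι → A) B (x ⊗ₜ[A] b)).val n =
        Submodule.Quotient.mk (x ⊗ₜ[A] bb) := by
      rw [adicCmp_tmul_val, ← hbb, tensorQuotMap_tmul_mk]
    have h2 : z.val n = Submodule.Quotient.mk (freeTensorEquiv B ι (x ⊗ₜ[A] bb)) := by
      rw [hz, AdicCompletion.congr_apply, AdicCompletion.map_val_apply, h1,
        LinearMap.reduceModIdeal_apply]
      rfl
    have h3 : (AdicCompletion.piEquivOfFintype I (fun _ : ι => B)) z j =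
        AdicCompletion.map I (LinearMap.proj j) z := by
      rw [AdicCompletion.piEquivOfFintype_apply]
      rfl
    rw [h3]
    show (AdicCompletion.map I (LinearMap.proj j) z).val n =
      ((freeTensorEquiv (AdicCompletion I B) ι) (x ⊗ₜ[A] b) j).val n
    rw [AdicCompletion.map_val_apply, h2, LinearMap.reduceModIdeal_apply,
      freeTensorEquiv_tmul, freeTensorEquiv_tmul]
    show Submodule.Quotient.mk (x j • bb) = (x j • b).val n
    rw [AdicCompletion.val_smul_apply, ← hbb, ← Submodule.Quotient.mk_smul]

lemma adicCmp_free_bijective : Function.Bijective (adicCmp I (ι → A) B) := by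
  have h : ⇑(adicCmp I (ι → A) B) =
      (⇑(AdicCompletion.congr I (freeTensorEquiv B ι)).symm ∘
        ⇑(AdicCompletion.piEquivOfFintype I (fun _ : ι => B)).symm) ∘
      ⇑(freeTensorEquiv (AdicCompletion I B) ι) := by
    funext t
    simp only [Function.comp_apply]
    rw [eq_comm, LinearEquiv.symm_apply_eq, LinearEquiv.symm_apply_eq, adicCmp_free_eq]
  rw [h]
  exact (((LinearEquiv.bijective _).comp (LinearEquiv.bijective _)).comp
    (LinearEquiv.bijective _))

end FreeCase
section Bijectivity

variable {A : Type} [CommRing A] (I : Ideal A)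
variable (B : Type) [AddCommGroup B] [Module A B]
variable {M : Type} [AddCommGroup M] [Module A M]

lemma adicCmp_surjective (hM : Module.Finite A M) :
    Function.Surjective (adicCmp I M B) := by
  obtain ⟨n, p, hp⟩ := Module.Finite.exists_fin' A M
  have hnat := adicCmp_naturality I (B := B) p
  have hcomp : ⇑(adicCmp I M B) ∘ ⇑(p.rTensor (AdicCompletion I B)) =
      ⇑(AdicCompletion.map I (p.rTensor B)) ∘ ⇑(adicCmp I (Fin n → A) B) := by
    rw [← LinearMap.coe_comp, ← hnat]; rfl
  have hsurj : Function.Surjective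
      (⇑(AdicCompletion.map I (p.rTensor B)) ∘ ⇑(adicCmp I (Fin n → A) B)) :=
    (AdicCompletion.map_surjective I (LinearMap.rTensor_surjective B hp)).comp
      (adicCmp_free_bijective I B (Fin n)).surjective
  rw [← hcomp] at hsurj
  exact hsurj.of_comp

set_option maxHeartbeats 1000000 in
lemma adicCmp_injective [IsNoetherianRing A] [Module.Flat A B] (hM : Module.Finite A M) :
    Function.Injective (adicCmp I M B) := by
  obtain ⟨n, p, hp⟩ := Module.Finite.exists_fin' A M
  have hKfin : Module.Finite A ↥(LinearMap.ker p) :=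
    Module.Finite.iff_fg.mpr (IsNoetherian.noetherian _)
  have hiB : Function.Injective ((LinearMap.ker p).subtype.rTensor B) :=
    Module.Flat.rTensor_preserves_injective_linearMap _ (Submodule.injective_subtype _)
  have hexB : Function.Exact ((LinearMap.ker p).subtype.rTensor B) (p.rTensor B) :=
    Module.Flat.rTensor_exact B (LinearMap.exact_subtype_ker_map p)
  have hpB : Function.Surjective (p.rTensor B) := LinearMap.rTensor_surjective B hp
  obtain ⟨k, hk⟩ := exists_pow_inf_eq_pow_smul_rTensor I (B := B) (LinearMap.ker p).subtype
  have hex := ARExact.map_exact' (R := A) (I := I)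
    (M := (↥(LinearMap.ker p)) ⊗[A] B) (N := (Fin n → A) ⊗[A] B) (P := M ⊗[A] B)
    (f := (LinearMap.ker p).subtype.rTensor B) (g := p.rTensor B) hiB hexB hpB (k := k) hk
  rw [← LinearMap.ker_eq_bot, LinearMap.ker_eq_bot']
  intro t ht
  obtain ⟨y, rfl⟩ := LinearMap.rTensor_surjective (AdicCompletion I B) hp t
  have h2 : AdicCompletion.map I (p.rTensor B) (adicCmp I (Fin n → A) B y) = 0 := by
    have := LinearMap.congr_fun (adicCmp_naturality I (B := B) p) y
    simp only [LinearMap.coe_comp, Function.comp_apply, LinearMap.coe_restrictScalars] at this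
    rw [this, ht]
  obtain ⟨z, hz⟩ := (hex _).mp h2
  obtain ⟨w, rfl⟩ := adicCmp_surjective I B hKfin z
  have h4 : adicCmp I (Fin n → A) B
      ((LinearMap.ker p).subtype.rTensor (AdicCompletion I B) w) =
      adicCmp I (Fin n → A) B y := by
    have := LinearMap.congr_fun (adicCmp_naturality I (B := B) (LinearMap.ker p).subtype) w
    simp only [LinearMap.coe_comp, Function.comp_apply, LinearMap.coe_restrictScalars] at this
    rw [← this, hz]
  have h5 := (adicCmp_free_bijective I B (Fin n)).injective h4
  rw [← h5, ← LinearMap.comp_apply, ← LinearMap.rTensor_comp,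
    LinearMap.comp_ker_subtype, LinearMap.rTensor_zero, LinearMap.zero_apply]

lemma adicCmp_bijective [IsNoetherianRing A] [Module.Flat A B] (hM : Module.Finite A M) :
    Function.Bijective (adicCmp I M B) :=
  ⟨adicCmp_injective I B hM, adicCmp_surjective I B hM⟩

end Bijectivity
section FlatFaithful

variable {A : Type} [CommRing A] (I : Ideal A)
variable (B : Type) [AddCommGroup B] [Module A B]

set_option maxHeartbeats 1000000 in
lemma adicCompletion_flat [IsNoetherianRing A] [Module.Flat A B] :
    Module.Flat A (AdicCompletion I B) := by
  rw [Module.Flat.iff_rTensor_injective']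
  intro J
  have hJfin : Module.Finite A ↥J := Module.Finite.iff_fg.mpr (IsNoetherian.noetherian J)
  have hsub : Function.Injective (J.subtype.rTensor B) :=
    Module.Flat.rTensor_preserves_injective_linearMap _ (Submodule.injective_subtype _)
  obtain ⟨k, hk⟩ := exists_pow_inf_eq_pow_smul_rTensor I (B := B) J.subtype
  have hmapinj := ARExact.map_injective' (R := A) I (M := (↥J) ⊗[A] B) (N := A ⊗[A] B)
    (f := J.subtype.rTensor B) hsub (k := k) hk
  have hcomp : ⇑(AdicCompletion.map I (J.subtype.rTensor B)) ∘ ⇑(adicCmp I (↥J) B) =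
      ⇑(adicCmp I A B) ∘ ⇑(J.subtype.rTensor (AdicCompletion I B)) := by
    rw [← LinearMap.coe_comp, ← adicCmp_naturality I (B := B) J.subtype]; rfl
  have hinj : Function.Injective
      (⇑(adicCmp I A B) ∘ ⇑(J.subtype.rTensor (AdicCompletion I B))) := by
    rw [← hcomp]
    exact hmapinj.comp (adicCmp_injective I B hJfin)
  exact Function.Injective.of_comp hinj

set_option maxHeartbeats 1000000 in
lemma adicCompletion_faithfullyFlat [IsNoetherianRing A] [Module.Flat A B]
    (hI : I ≤ (⊥ : Ideal A).jacobson) (hB : Module.FaithfullyFlat A B) :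
    Module.FaithfullyFlat A (AdicCompletion I B) := by
  haveI : Module.Flat A (AdicCompletion I B) := adicCompletion_flat I B
  refine ⟨fun m hm heq => ?_⟩
  -- `X = B / mB` is nontrivial since `B` is faithfully flat
  haveI hXnt : Nontrivial (B ⧸ (m • ⊤ : Submodule A B)) :=
    Submodule.Quotient.nontrivial_iff.mpr ((hB.submodule_ne_top hm).lt_top).ne
  have hIm : I ≤ m := le_trans hI (sInf_le ⟨bot_le, hm⟩)
  -- `I • X = 0`
  have h0 : (I ^ 1 • ⊤ : Submodule A (B ⧸ (m • ⊤ : Submodule A B))) = ⊥ := by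
    rw [pow_one, Submodule.eq_bot_iff]
    intro x hx
    refine Submodule.smul_induction_on hx (fun a ha y _ => ?_) (fun y z hy hz => by
      rw [hy, hz, add_zero])
    obtain ⟨b, rfl⟩ := Submodule.Quotient.mk_surjective _ y
    rw [← Submodule.Quotient.mk_smul, Submodule.Quotient.mk_eq_zero]
    exact Submodule.smul_mem_smul (hIm ha) Submodule.mem_top
  -- the completion of `X` is nontrivial
  haveI hnt1 : Nontrivial ((B ⧸ (m • ⊤ : Submodule A B)) ⧸
      (I ^ 1 • ⊤ : Submodule A (B ⧸ (m • ⊤ : Submodule A B)))) := by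
    rw [h0]
    exact Submodule.Quotient.nontrivial_iff.mpr bot_lt_top.ne
  haveI hnt2 : Nontrivial (AdicCompletion I (B ⧸ (m • ⊤ : Submodule A B))) :=
    (AdicCompletion.eval_surjective I (B ⧸ (m • ⊤ : Submodule A B)) 1).nontrivial
  -- transfer along `((A/m) ⊗ B)^ ≃ X^`
  haveI hnt3 : Nontrivial (AdicCompletion I ((A ⧸ m) ⊗[A] B)) :=
    Function.Surjective.nontrivial
      (AdicCompletion.congr I (TensorProduct.quotTensorEquivQuotSMul B m)).surjective
  -- transfer along `adicCmp`
  haveI hmfin : Module.Finite A (A ⧸ m) :=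
    Module.Finite.of_surjective m.mkQ (Submodule.mkQ_surjective m)
  haveI hnt4 : Nontrivial ((A ⧸ m) ⊗[A] AdicCompletion I B) :=
    Function.Surjective.nontrivial (adicCmp_surjective I B hmfin)
  -- but `m • B̂ = B̂` forces the tensor product to be trivial
  haveI hsub : Subsingleton ((A ⧸ m) ⊗[A] AdicCompletion I B) := by
    have e := TensorProduct.quotTensorEquivQuotSMul (AdicCompletion I B) m
    rw [e.toEquiv.subsingleton_congr, Submodule.Quotient.subsingleton_iff]
    exact heq
  exact not_subsingleton _ hsub

end FlatFaithful
/-- **Flat base change and adic completion (Artin–Rees).**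
Let `A` be Noetherian, `I ⊆ A` an ideal and `B` a flat `A`-algebra.  Then for every
finite `A`-module `M` the natural map `M ⊗_A B̂ → (M ⊗_A B)^` is an isomorphism, and `B̂`
is flat over `A`.  If moreover `I ⊆ Rad(A)` and `B` is faithfully flat over `A`, then
`B̂` is faithfully flat over `A`. -/
theorem statement16 {A : Type} [CommRing A] [IsNoetherianRing A] (I : Ideal A)
    (B : Type) [CommRing B] [Algebra A B] [Module.Flat A B] :
    (∀ (M : Type) [AddCommGroup M] [Module A M], Module.Finite A M →
      Function.Bijective (adicCmp I M B)) ∧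
    Module.Flat A (AdicCompletion I B) ∧
    (I ≤ (⊥ : Ideal A).jacobson → Module.FaithfullyFlat A B →
      Module.FaithfullyFlat A (AdicCompletion I B)) :=
  ⟨fun M _ _ hM => adicCmp_bijective I B hM, adicCompletion_flat I B,
    fun hI hB => adicCompletion_faithfullyFlat I B hI hB⟩
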